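/- Let h : [1,∞) → [1,∞) be a measurable function with h(s) ≥ 1 for all s, and suppose ∫₁^∞ ds/h(s) = +∞ is false, i.e. ∫₁^∞ ds/h(s) < +∞. Then for every natural number n ≥ 1, ∫₁^∞ h(s)^n/s^{n+1} ds = +∞. -/

import Mathlib

open MeasureTheory

theorem stmt2 (h : ℝ → ℝ) (hmeas : Measurable h) (h1 : ∀ s ∈ Set.Ici (1:ℝ), 1 ≤ h s)
    (hint : IntegrableOn (fun s => 1 / h s) (Set.Ici (1:ℝ))) :
    ∀ n : ℕ, 1 ≤ n →
      ¬ IntegrableOn (fun s => h s ^ n / s ^ (n + 1)) (Set.Ici (1:ℝ)) := by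
  intro n hn Hf
  set N : ℝ := (n : ℝ) with hN
  have hN0 : (0:ℝ) < N := by rw [hN]; exact_mod_cast Nat.lt_of_lt_of_le Nat.zero_lt_one hn
  have hN1 : (0:ℝ) < N + 1 := by linarith
  -- the bound function
  set g : ℝ → ℝ := fun s => (N/(N+1)) * (1 / h s) + (1/(N+1)) * (h s ^ n / s ^ (n+1)) with hg
  have hg_int : IntegrableOn g (Set.Ici (1:ℝ)) :=
    (hint.const_mul _).add (Hf.const_mul _)
  have hinv : IntegrableOn (fun s : ℝ => s⁻¹) (Set.Ici (1:ℝ)) := by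
    apply hg_int.mono' measurable_inv.aestronglyMeasurable
    filter_upwards [ae_restrict_mem measurableSet_Ici] with s hs
    have hs1 : (1:ℝ) ≤ s := hs
    have hs0 : (0:ℝ) < s := lt_of_lt_of_le zero_lt_one hs1
    have ha1 : (1:ℝ) ≤ h s := h1 s hs
    have ha0 : (0:ℝ) < h s := lt_of_lt_of_le zero_lt_one ha1
    have key : (1 / h s) ^ (N/(N+1)) * (h s ^ n / s ^ (n+1)) ^ (1/(N+1)) = s⁻¹ := by
      have hpow : (h s : ℝ) ^ n = h s ^ (N : ℝ) := by
        rw [← Real.rpow_natCast (h s) n]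
      have hpow2 : (s : ℝ) ^ (n+1) = s ^ ((N+1) : ℝ) := by
        rw [← Real.rpow_natCast s (n+1)]
        norm_num
        rw [hN]
      rw [hpow, hpow2, one_div (h s), ← Real.rpow_neg_one (h s),
        ← Real.rpow_mul ha0.le, Real.div_rpow (by positivity) (by positivity),
        ← Real.rpow_mul ha0.le, ← Real.rpow_mul hs0.le,
        show (-1) * (N/(N+1)) = -(N/(N+1)) by ring,
        show N * (1/(N+1)) = N/(N+1) by ring,
        show (N+1) * (1/(N+1)) = 1 by field_simp,
        Real.rpow_one, Real.rpow_neg ha0.le]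
      have hne : h s ^ (N/(N+1)) ≠ 0 := by positivity
      field_simp
    calc ‖s⁻¹‖ = s⁻¹ := by rw [Real.norm_eq_abs, abs_of_pos (inv_pos.2 hs0)]
    _ = (1 / h s) ^ (N/(N+1)) * (h s ^ n / s ^ (n+1)) ^ (1/(N+1)) := key.symm
    _ ≤ (N/(N+1)) * (1 / h s) + (1/(N+1)) * (h s ^ n / s ^ (n+1)) := by
        apply Real.geom_mean_le_arith_mean2_weighted
        · positivity
        · positivity
        · positivity
        · positivity
        · field_simp
    _ = g s := rfl
  have : IntegrableOn (fun s : ℝ => s⁻¹) (Set.Ioi (1:ℝ)) :=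
    hinv.mono Set.Ioi_subset_Ici_self le_rfl
  exact not_IntegrableOn_Ioi_inv this
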